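/- Let q be a prime power, K a finite field with q elements, L a degree-2 field extension of K, ℓ an odd prime dividing q+1, η ∈ L with η^(q+1) = 1 and η^((q+1)/ℓ) ≠ 1, and α ∈ K with algebraMap K L α = η + η⁻¹. Let Ω be an algebraically closed field containing L, let i ≥ 0 and let μ ∈ Ω satisfy μ^(ℓ^i) = η. Then the minimal polynomial of μ + μ⁻¹ over K equals P_{ℓ^i} − C α. -/

import Mathlib

open Polynomial

private theorem dickson_monic_helper {R : Type*} [CommRing R] [Nontrivial R] {P Q : R[X]} {d : ℕ}
    (hP : P.Monic) (hPd : P.natDegree = d + 1) (hQ : Q.degree ≤ (d : WithBot ℕ)) :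
    (X * P - Q).Monic ∧ (X * P - Q).natDegree = d + 2 := by
  have hXP : (X * P : R[X]).Monic := monic_X.mul hP
  have hd : (X * P).natDegree = d + 2 := by
    rw [monic_X.natDegree_mul hP, natDegree_X, hPd]; omega
  have hQn : Q.natDegree ≤ d := natDegree_le_iff_degree_le.mpr hQ
  have hlt : Q.degree < (X * P).degree := by
    rw [degree_eq_natDegree hXP.ne_zero, hd]
    refine lt_of_le_of_lt hQ ?_
    exact_mod_cast Nat.lt_add_of_pos_right (by omega)
  refine ⟨hXP.sub_of_left hlt, ?_⟩
  rw [natDegree_sub_eq_left_of_natDegree_lt (by rw [hd]; omega), hd]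

private theorem dickson_one_one_monic_natDegree (R : Type*) [CommRing R] [Nontrivial R] :
    ∀ n : ℕ, (dickson 1 (1 : R) (n + 1)).Monic ∧ (dickson 1 (1 : R) (n + 1)).natDegree = n + 1 := by
  intro n
  induction n using Nat.strong_induction_on with
  | _ n ih =>
    match n with
    | 0 => exact ⟨by rw [dickson_one]; exact monic_X, by rw [dickson_one, natDegree_X]⟩
    | 1 =>
      rw [show (1 + 1 : ℕ) = 0 + 2 from rfl, dickson_add_two, dickson_one, dickson_zero]
      have hQ : (C (1:R) * ((3:R[X]) - (1:ℕ))).degree ≤ ((0:ℕ) : WithBot ℕ) := by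
        rw [C_1, one_mul]
        refine le_trans (degree_sub_le _ _) (max_le ?_ ?_)
        · simpa using degree_natCast_le (R := R) 3
        · exact degree_natCast_le 1
      exact dickson_monic_helper monic_X natDegree_X hQ
    | (k+2) =>
      rw [show k + 2 + 1 = (k + 1) + 2 from rfl, dickson_add_two]
      obtain ⟨hm2, hd2⟩ := ih (k + 1) (by omega)
      obtain ⟨hm1, hd1⟩ := ih k (by omega)
      have hQ : (C (1:R) * dickson 1 (1:R) (k + 1)).degree ≤ ((k + 1 : ℕ) : WithBot ℕ) := by
        rw [C_1, one_mul]
        exact le_trans degree_le_natDegree (by exact_mod_cast le_of_eq (by rw [hd1]))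
      exact dickson_monic_helper hm2 hd2 hQ

open IntermediateField in
/-- with `q, K, L, ℓ, η, α` as in the quasi-cyclotomic `T₂` construction, `Ω` an
algebraically closed field containing `L`, `i ≥ 0` and `μ ∈ Ω` with `μ ^ (ℓ^i) = η`, the minimal
polynomial of `μ + μ⁻¹` over `K` equals `P_{ℓ^i} - C α`, where `P_n` is the Dickson polynomial of
the first kind with parameter 1. -/
theorem minpoly_add_inv_eq_dickson_sub_C
    (q ℓ : ℕ) (hq : IsPrimePow q)
    (K L Ω : Type*) [Field K] [Fintype K] [Field L] [Algebra K L]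
    [Field Ω] [IsAlgClosed Ω] [Algebra L Ω] [Algebra K Ω] [IsScalarTower K L Ω]
    (hcard : Fintype.card K = q) (hKL : Module.finrank K L = 2)
    (hℓ : ℓ.Prime) (hℓodd : Odd ℓ) (hℓdvd : ℓ ∣ q + 1)
    (η : L) (hη1 : η ^ (q + 1) = 1) (hη2 : η ^ ((q + 1) / ℓ) ≠ 1)
    (α : K) (hα : algebraMap K L α = η + η⁻¹)
    (i : ℕ) (μ : Ω) (hμ : μ ^ ℓ ^ i = algebraMap L Ω η) :
    minpoly K (μ + μ⁻¹) = dickson 1 (1 : K) (ℓ ^ i) - C α := by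
  have hq2 : 2 ≤ q := hcard ▸ Fintype.one_lt_card
  set n := ℓ ^ i with hn_def
  have hn0 : 0 < n := pow_pos hℓ.pos i
  -- basic nonvanishing facts
  have hη0 : η ≠ 0 := by
    intro h; rw [h, zero_pow (by omega)] at hη1; exact zero_ne_one hη1
  have hι : Function.Injective (algebraMap L Ω) := (algebraMap L Ω).injective
  set η' : Ω := algebraMap L Ω η with hη'def
  have hη'1 : η' ^ (q + 1) = 1 := by rw [hη'def, ← map_pow, hη1, map_one]
  have hη'2 : η' ^ ((q + 1) / ℓ) ≠ 1 := by
    intro h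
    exact hη2 (hι (by rwa [map_pow, map_one]))
  have hη'0 : η' ≠ 0 := by
    rw [hη'def]
    exact (map_ne_zero (algebraMap L Ω)).mpr hη0
  have hμ0 : μ ≠ 0 := by
    intro h; rw [h, zero_pow hn0.ne'] at hμ; exact hη'0 hμ.symm
  have hμβ : μ * μ⁻¹ = 1 := mul_inv_cancel₀ hμ0
  set β := μ + μ⁻¹ with hβdef
  -- the candidate polynomial is monic of degree n and kills β
  obtain ⟨hPm, hPd⟩ := dickson_one_one_monic_natDegree K (n - 1)
  rw [Nat.sub_add_cancel hn0] at hPm hPd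
  set P : Polynomial K := dickson 1 1 n - C α with hPdef
  have hPmonic : P.Monic := by
    refine hPm.sub_of_left (lt_of_le_of_lt degree_C_le ?_)
    rw [degree_eq_natDegree hPm.ne_zero, hPd]
    exact_mod_cast hn0
  have hPdeg : P.natDegree = n := by
    rw [hPdef, natDegree_sub_eq_left_of_natDegree_lt (by rw [hPd, natDegree_C]; exact hn0), hPd]
  have hroot : (Polynomial.aeval β) P = 0 := by
    rw [hPdef, map_sub, aeval_C, aeval_def, eval₂_eq_eval_map, Polynomial.map_dickson, map_one,
      dickson_one_one_eval_add_inv μ μ⁻¹ hμβ n, hμ, inv_pow, hμ,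
      IsScalarTower.algebraMap_apply K L Ω, hα, map_add, map_inv₀]
    ring
  have hβint : IsIntegral K β := ⟨P, hPmonic, by rw [← aeval_def]; exact hroot⟩
  have hdvd : minpoly K β ∣ P := minpoly.dvd K β hroot
  set m := (minpoly K β).natDegree with hm
  have hm1 : 0 < m := minpoly.natDegree_pos hβint
  have hmn : m ≤ n := hPdeg ▸ natDegree_le_of_dvd hdvd hPmonic.ne_zero
  -- characteristic and Frobenius set-up
  set p := ringChar K with hpdef
  haveI : CharP K p := ringChar.charP K
  obtain ⟨e, hp_prime, hqpe⟩ := FiniteField.card K p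
  rw [hcard] at hqpe
  haveI : Fact p.Prime := ⟨hp_prime⟩
  haveI : CharP Ω p := charP_of_injective_algebraMap (algebraMap K Ω).injective p
  -- β lies in a subfield with q ^ m elements
  haveI := IntermediateField.adjoin.finiteDimensional hβint
  have hfr : Module.finrank K K⟮β⟯ = m := IntermediateField.adjoin.finrank hβint
  haveI : Finite K⟮β⟯ := Module.finite_of_finite K
  haveI : Fintype K⟮β⟯ := Fintype.ofFinite _
  have hcardF : Fintype.card K⟮β⟯ = q ^ m := by
    rw [Module.card_eq_pow_finrank (K := K) (V := K⟮β⟯), hfr, hcard]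
  have hβfix : β ^ q ^ m = β := by
    have hb := FiniteField.pow_card (⟨β, IntermediateField.mem_adjoin_simple_self K β⟩ : K⟮β⟯)
    rw [hcardF] at hb
    have := congrArg (fun y : K⟮β⟯ => (y : Ω)) hb
    push_cast at this
    exact this
  have hqm : q ^ m = p ^ (e * m : ℕ) := by rw [hqpe, ← pow_mul]
  set φ := iterateFrobenius Ω p (e * m) with hφ
  have hφx : ∀ x : Ω, φ x = x ^ q ^ m := fun x => by
    rw [hφ, iterateFrobenius_def, ← hqm]
  have hquad : μ ^ 2 + 1 = β * μ := by
    rw [hβdef]; field_simp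
  have hz : (μ ^ q ^ m) ^ 2 + 1 = β * μ ^ q ^ m := by
    have h := congrArg φ hquad
    simp only [map_add, map_mul, map_one, map_pow] at h
    rwa [hφx, hφx, hβfix] at h
  have hfactor : (μ ^ q ^ m - μ) * (μ ^ q ^ m - μ⁻¹) = 0 := by
    have expand : (μ ^ q ^ m - μ) * (μ ^ q ^ m - μ⁻¹)
        = ((μ ^ q ^ m) ^ 2 + μ * μ⁻¹) - β * μ ^ q ^ m := by rw [hβdef]; ring
    rw [expand, hμβ, hz, sub_self]
  have hμfix : μ ^ q ^ (2 * m) = μ := by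
    have h2 : q ^ (2 * m) = q ^ m * q ^ m := by rw [two_mul, pow_add]
    rcases mul_eq_zero.mp hfactor with h | h
    · have hzμ : μ ^ q ^ m = μ := sub_eq_zero.mp h
      rw [h2, pow_mul, hzμ, hzμ]
    · have hzμ : μ ^ q ^ m = μ⁻¹ := sub_eq_zero.mp h
      rw [h2, pow_mul, hzμ, inv_pow, hzμ, inv_inv]
  have hq2m1pos : 1 < q ^ (2 * m) := Nat.one_lt_pow (by omega) (by omega)
  have hq2m1 : μ ^ (q ^ (2 * m) - 1) = 1 := by
    have h1 : q ^ (2 * m) - 1 + 1 = q ^ (2 * m) := by omega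
    have h : μ ^ (q ^ (2 * m) - 1) * μ = 1 * μ := by
      rw [one_mul, ← pow_succ, h1, hμfix]
    exact mul_right_cancel₀ hμ0 h
  -- order-theoretic bookkeeping
  have hfinμ : IsOfFinOrder μ :=
    isOfFinOrder_iff_pow_eq_one.mpr ⟨n * (q + 1), by positivity, by rw [pow_mul, hμ, hη'1]⟩
  have hfinη : IsOfFinOrder η' :=
    isOfFinOrder_iff_pow_eq_one.mpr ⟨q + 1, by omega, hη'1⟩
  set t := orderOf μ with ht
  have htdvd : t ∣ q ^ (2 * m) - 1 := orderOf_dvd_of_pow_eq_one hq2m1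
  set s := orderOf η' with hs
  have hsdvd : s ∣ q + 1 := orderOf_dvd_of_pow_eq_one hη'1
  have hs0 : s ≠ 0 := hfinη.orderOf_pos.ne'
  set a := (q + 1).factorization ℓ with ha
  have hq10 : q + 1 ≠ 0 := by omega
  have ha1 : 1 ≤ a :=
    (Nat.Prime.pow_dvd_iff_le_factorization hℓ hq10).mp (by simpa using hℓdvd)
  have hlas : ℓ ^ a ∣ s := by
    by_contra hcon
    have hb : s.factorization ℓ < a := by
      by_contra hge
      exact hcon ((Nat.Prime.pow_dvd_iff_le_factorization hℓ hs0).mpr (le_of_not_gt hge))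
    have h4 : ℓ ^ a = ℓ * ℓ ^ (a - 1) := by
      conv_lhs => rw [show a = (a - 1) + 1 by omega]
      rw [pow_succ']
    have hsdv : s ∣ (q + 1) / ℓ := by
      have h1 : s = ℓ ^ (s.factorization ℓ) * (s / ℓ ^ (s.factorization ℓ)) :=
        (Nat.ordProj_mul_ordCompl_eq_self s ℓ).symm
      have h2 : (q + 1) / ℓ = ℓ ^ (a - 1) * ((q + 1) / ℓ ^ a) := by
        calc (q + 1) / ℓ = ℓ * (ℓ ^ (a - 1) * ((q + 1) / ℓ ^ a)) / ℓ := by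
              rw [← mul_assoc, ← h4, Nat.ordProj_mul_ordCompl_eq_self (q + 1) ℓ]
          _ = ℓ ^ (a - 1) * ((q + 1) / ℓ ^ a) := Nat.mul_div_cancel_left _ hℓ.pos
      rw [h1, h2]
      exact mul_dvd_mul (pow_dvd_pow ℓ (by omega)) (Nat.ordCompl_dvd_ordCompl_of_dvd hsdvd ℓ)
    exact hη'2 (orderOf_dvd_iff_pow_eq_one.mp hsdv)
  have hst : s = t / Nat.gcd t n := by rw [hs, ← hμ]; exact hfinμ.orderOf_pow ..
  have hts : t = s * Nat.gcd t n := by rw [hst, Nat.div_mul_cancel (Nat.gcd_dvd_left t n)]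
  obtain ⟨j, hji, hgj⟩ := (Nat.dvd_prime_pow hℓ).mp (show Nat.gcd t n ∣ ℓ ^ i from Nat.gcd_dvd_right t n)
  have hji' : j = i := by
    by_contra hne
    have hjlt : j < i := lt_of_le_of_ne hji hne
    have h1 : ℓ ^ (j + 1) ∣ t := by
      rw [hts, hgj, pow_succ']
      exact mul_dvd_mul (dvd_trans (dvd_pow_self ℓ (by omega)) hlas) dvd_rfl
    have h2 : ℓ ^ (j + 1) ∣ Nat.gcd t n :=
      Nat.dvd_gcd h1 (show ℓ ^ (j + 1) ∣ ℓ ^ i from pow_dvd_pow ℓ (by omega))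
    rw [hgj] at h2
    have := (Nat.pow_dvd_pow_iff_le_right hℓ.one_lt).mp h2
    omega
  have hlat : ℓ ^ (i + a) ∣ t := by
    have hpa : ℓ ^ (i + a) = ℓ ^ a * ℓ ^ i := by rw [← pow_add, add_comm]
    rw [hts, hgj, hji', hpa]
    exact mul_dvd_mul hlas dvd_rfl
  -- lifting the exponent
  have hqℓ : ¬ ℓ ∣ q := by
    intro h
    have h1 := Nat.dvd_sub hℓdvd h
    rw [show q + 1 - q = 1 by omega] at h1
    exact hℓ.ne_one (Nat.dvd_one.mp h1)
  have hℓq1 : ¬ ℓ ∣ q - 1 := by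
    intro h
    have h1 := Nat.dvd_sub hℓdvd h
    rw [show q + 1 - (q - 1) = 2 by omega] at h1
    have h2 := (Nat.prime_dvd_prime_iff_eq hℓ Nat.prime_two).mp h1
    have h3 := Nat.odd_iff.mp hℓodd
    omega
  haveI : Fact ℓ.Prime := ⟨hℓ⟩
  have hsq : (q + 1) * (q - 1) = q ^ 2 - 1 := by
    have h1 : 1 ≤ q := by omega
    have h2 : 1 ≤ q ^ 2 := Nat.one_le_pow _ _ (by omega)
    zify [h1, h2]; ring
  have hq21 : ℓ ∣ q ^ 2 - 1 := dvd_trans hℓdvd (hsq ▸ Dvd.intro _ rfl)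
  have hq2m0 : q ^ (2 * m) - 1 ≠ 0 := by omega
  have hval : i + a ≤ padicValNat ℓ (q ^ (2 * m) - 1) :=
    (padicValNat_dvd_iff_le hq2m0).mp (dvd_trans hlat htdvd)
  have hLTE : padicValNat ℓ (q ^ (2 * m) - 1) = padicValNat ℓ (q ^ 2 - 1) + padicValNat ℓ m := by
    have h1 : q ^ (2 * m) = (q ^ 2) ^ m := by rw [← pow_mul]
    have h2 : (1 : ℕ) < q ^ 2 := Nat.one_lt_pow (by omega) (by omega)
    have h3 : ¬ ℓ ∣ q ^ 2 := fun h => hqℓ (hℓ.dvd_of_dvd_pow h)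
    have := padicValNat.pow_sub_pow (p := ℓ) (x := q ^ 2) (y := 1) hℓodd h2 (by simpa using hq21)
      h3 (n := m) (by omega)
    simpa [h1] using this
  have hvq21 : padicValNat ℓ (q ^ 2 - 1) = a := by
    rw [← hsq, padicValNat.mul (by omega) (by omega),
      padicValNat.eq_zero_of_not_dvd hℓq1, add_zero, ha, Nat.factorization_def _ hℓ]
  have him : i ≤ padicValNat ℓ m := by omega
  have hnm : n ≤ m := Nat.le_of_dvd hm1
    (show ℓ ^ i ∣ m from (padicValNat_dvd_iff_le hm1.ne').mpr him)
  exact (eq_of_monic_of_dvd_of_natDegree_le (minpoly.monic hβint) hPmonic hdvd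
    (by rw [hPdeg, ← hm]; omega)).symm
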